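/- Let n be a positive integer and let m = 3 or m = p + 2 for an odd prime p. Then r_{m,1}(n) = r'_{m,1}(n) - 1. -/

import Mathlib

/-- The `c`-th `m`-gonal number: `P(m,c) = c((m-2)c - (m-4))/2`. -/
def polygonal (m c : ℤ) : ℤ := c * ((m - 2) * c - (m - 4)) / 2

/-- `r_{m,t}(n)`: the number of unordered pairs `{a,b}` of positive integers with
`a + b = n` such that `ab = t·P(m,c)` for some `c`, where `c` ranges over positive
integers if `m = 3` or `m = 4`, and over all integers if `m > 4`. -/
noncomputable def rmt (m t n : ℕ) : ℕ :=
  Set.ncard {p : ℕ × ℕ | 0 < p.1 ∧ p.1 ≤ p.2 ∧ p.1 + p.2 = n ∧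
    ∃ c : ℤ, ((m = 3 ∨ m = 4) → 0 < c) ∧ (p.1 : ℤ) * p.2 = t * polygonal m c}

/-- `r'_{m,t}(n)`: the number of pairs `(x,y)` of nonnegative integers with
`2(m-2)n² + t(m-4)² = 2(m-2)x² + t y²`. -/
noncomputable def rmt' (m t n : ℕ) : ℕ :=
  Set.ncard {p : ℕ × ℕ |
    2 * ((m : ℤ) - 2) * (n : ℤ) ^ 2 + t * ((m : ℤ) - 4) ^ 2 =
    2 * ((m : ℤ) - 2) * (p.1 : ℤ) ^ 2 + t * (p.2 : ℤ) ^ 2}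

/-- `d_A(n)`: the number of positive divisors of `n` not divisible by any prime in `A`.
Equivalently, `∏_{p prime, p ∉ A} (1 + ord_p(n))`. -/
def dA (A : Finset ℕ) (n : ℕ) : ℕ :=
  (n.divisors.filter (fun d => ∀ p ∈ A, ¬ p ∣ d)).card

lemma even_key (P c : ℤ) (hPodd : Odd P) : Even (c * (P*c - (P-2))) := by
  rcases Int.even_or_odd c with ⟨u, hu⟩ | ⟨u, hu⟩
  · exact ⟨u * (P*c - (P-2)), by rw [hu]; ring⟩
  · obtain ⟨k, hk⟩ := hPodd
    exact ⟨c * (P*u + 1), by rw [hu, hk]; ring⟩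

lemma sq_eq_nat {a b : ℕ} (h : (a:ℤ)^2 = (b:ℤ)^2) : a = b := by
  have h0 : ((a:ℤ) - b) * ((a:ℤ) + b) = 0 := by ring_nf; linarith
  rcases mul_eq_zero.mp h0 with h1 | h1 <;> omega

lemma classify (P : ℤ) (hP1 : 1 ≤ P) (hPodd : Odd P)
    (hPc : P = 1 ∨ Prime P)
    (n x y : ℤ) (hn : 0 < n) (hx : 0 ≤ x) (hy : 0 ≤ y)
    (hE : 2*P*n^2 + (P-2)^2 = 2*P*x^2 + y^2) :
    (x = n ∧ y^2 = (P-2)^2) ∨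
    (x < n ∧ 2 ∣ (n - x) ∧ ∃ c : ℤ, (P = 1 → 0 < c) ∧
      (n-x)*(n+x) = 2*(c*(P*c-(P-2)))) := by
  obtain ⟨k, hk⟩ := hPodd
  have hPpos : (0:ℤ) < P := by linarith
  -- y is odd
  have hyodd : Odd y := by
    rcases Int.even_or_odd y with ⟨t, ht⟩ | h
    · exfalso
      have h2 : (1:ℤ) = 2*((2*k+1)*x^2 + 2*t^2 - (2*k+1)*n^2 - 2*k^2 + 2*k) := by
        rw [hk, ht] at hE; linear_combination hE
      omega
    · exact h
  -- divisibility fact P ∣ (y-2)(y+2)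
  have hdvd : P ∣ (y-2)*(y+2) := ⟨2*(n^2-x^2) + (P-4), by linear_combination -hE⟩
  have hyor : P ∣ y - 2 ∨ P ∣ y + 2 := by
    rcases hPc with h1 | hp
    · left; rw [h1]; exact one_dvd _
    · exact (Prime.dvd_mul hp).mp hdvd
  have hP3 : P = 1 ∨ 3 ≤ P := by
    rcases hPc with h1 | hp
    · left; exact h1
    · right
      have h2 : P ≠ 1 := hp.ne_one
      have h2' : P ≠ 2 := by rintro rfl; omega
      omega
  rcases le_or_gt n x with hge | hlt
  · -- x ≥ n case: show x = n and y² = (P-2)²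
    left
    have hx2 : n^2 ≤ x^2 := by nlinarith
    have hy2 : y^2 ≤ (P-2)^2 := by
      nlinarith [mul_nonneg hPpos.le (by linarith : (0:ℤ) ≤ x^2 - n^2)]
    have hysq : y^2 = (P-2)^2 := by
      rcases hP3 with h1 | h3
      · -- P = 1 : y² ≤ 1, y odd nonneg ⇒ y = 1
        obtain ⟨t, ht⟩ := hyodd
        have ht0 : 0 ≤ t := by omega
        have ht1 : t = 0 := by nlinarith
        rw [h1, ht, ht1]; ring
      · -- P prime ≥ 3
        have hyle : y ≤ P - 2 := by
          nlinarith [sq_nonneg (y - (P-2)), sq_nonneg (y + (P-2))]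
        rcases hyor with ⟨d, hd⟩ | ⟨d, hd⟩
        · exfalso
          have hd0 : d = 0 := by
            rcases lt_trichotomy d 0 with h | h | h
            · have := mul_le_mul_of_nonneg_left (by omega : d ≤ -1) hPpos.le
              linarith
            · exact h
            · have := mul_le_mul_of_nonneg_left (by omega : 1 ≤ d) hPpos.le
              linarith
          rw [hd0, mul_zero] at hd
          obtain ⟨t, ht⟩ := hyodd
          omega
        · have hd1 : d = 1 := by
            rcases lt_trichotomy d 1 with h | h | h
            · have := mul_le_mul_of_nonneg_left (by omega : d ≤ 0) hPpos.le
              simp at this; linarith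
            · exact h
            · have := mul_le_mul_of_nonneg_left (by omega : 2 ≤ d) hPpos.le
              linarith
          rw [hd1, mul_one] at hd
          have : y = P - 2 := by omega
          rw [this]
    have hxn : x = n := by
      have h2 : (2*P) * ((x-n)*(x+n)) = 0 := by linear_combination -hE - hysq
      rcases mul_eq_zero.mp h2 with h | h
      · exfalso; omega
      · rcases mul_eq_zero.mp h with h' | h' <;> omega
    exact ⟨hxn, hysq⟩
  · right
    have hx2 : x^2 < n^2 := by nlinarith
    have hy2 : (P-2)^2 < y^2 := by
      nlinarith [mul_pos hPpos (by linarith : (0:ℤ) < n^2 - x^2)]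
    -- construct c with 2Pc - (P-2) = ± y
    have hc : ∃ c : ℤ, (P = 1 → 0 < c) ∧ (2*P*c - (P-2))^2 = y^2 := by
      rcases hP3 with h1 | h3
      · obtain ⟨t, ht⟩ := hyodd
        refine ⟨t, ?_, ?_⟩
        · intro _
          have ht0 : 0 ≤ t := by omega
          rcases eq_or_lt_of_le ht0 with h | h
          · exfalso; rw [h1] at hy2; rw [ht, ← h] at hy2; norm_num at hy2
          · exact h
        · rw [h1, ht]; ring
      · have hPne1 : P ≠ 1 := by omega
        rcases hyor with ⟨d, hd⟩ | ⟨d, hd⟩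
        · -- y - 2 = P*d ⇒ 2P ∣ y + (P-2)
          have hd' : y + (P - 2) = P * (d + 1) := by linear_combination hd
          have hde : Even (d+1) := by
            rcases Int.even_or_odd (d+1) with h | h
            · exact h
            · exfalso
              have hodd : Odd (P * (d+1)) := Odd.mul ⟨k, hk⟩ h
              obtain ⟨t, ht⟩ := hyodd
              obtain ⟨s, hs⟩ := hodd
              omega
          obtain ⟨c, hcc⟩ := hde
          refine ⟨c, fun h => absurd h hPne1, ?_⟩
          have hy' : y = 2*P*c - (P-2) := by linear_combination hd' + P*hcc
          rw [hy']
        · -- y + 2 = P*d ⇒ 2P ∣ y - (P-2)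
          have hd' : y - (P - 2) = P * (d - 1) := by linear_combination hd
          have hde : Even (d-1) := by
            rcases Int.even_or_odd (d-1) with h | h
            · exact h
            · exfalso
              have hodd : Odd (P * (d-1)) := Odd.mul ⟨k, hk⟩ h
              obtain ⟨t, ht⟩ := hyodd
              obtain ⟨s, hs⟩ := hodd
              omega
          obtain ⟨c, hcc⟩ := hde
          refine ⟨-c, fun h => absurd h hPne1, ?_⟩
          have hy' : 2*P*(-c) - (P-2) = -y := by linear_combination hd' + P*hcc
          rw [hy']; ring
    obtain ⟨c, hcpos, hcsq⟩ := hc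
    have hprod : (n-x)*(n+x) = 2*(c*(P*c-(P-2))) := by
      have h1 : 2*P*((n-x)*(n+x)) = 2*P*(2*(c*(P*c-(P-2)))) := by
        linear_combination hE - hcsq
      exact mul_left_cancel₀ (by positivity) h1
    refine ⟨hlt, ?_, c, hcpos, hprod⟩
    -- parity
    obtain ⟨d, hd⟩ := even_key P c ⟨k, hk⟩
    rcases Int.even_or_odd (n - x) with ⟨u, hu⟩ | ⟨u, hu⟩
    · exact ⟨u, by omega⟩
    · exfalso
      have hZ : ∃ Z : ℤ, 4*Z + 2*u + 2*(u+x) + 1 = 4*d := by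
        refine ⟨u*(u+x), ?_⟩
        rw [hd] at hprod
        have hnx : n + x = 2*(u + x) + 1 := by omega
        rw [hu, hnx] at hprod
        linear_combination hprod
      obtain ⟨Z, hZ⟩ := hZ
      omega
lemma le_of_sq_le_sq' {a b : ℤ} (ha : 0 ≤ a) (hb : 0 ≤ b) (h : a^2 ≤ b^2) : a ≤ b := by
  by_contra hc
  push_neg at hc
  nlinarith

theorem stmt_1 (m n : ℕ) (hn : 0 < n)
    (hm : m = 3 ∨ ∃ p : ℕ, p.Prime ∧ Odd p ∧ m = p + 2) :
    rmt m 1 n = rmt' m 1 n - 1 := by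
  obtain ⟨p, hmp, hpc⟩ : ∃ p : ℕ, m = p + 2 ∧ (p = 1 ∨ (Nat.Prime p ∧ Odd p)) := by
    rcases hm with h | ⟨q, hq, hqo, hmq⟩
    · exact ⟨1, by omega, Or.inl rfl⟩
    · exact ⟨q, hmq, Or.inr ⟨hq, hqo⟩⟩
  set P : ℤ := (p:ℤ) with hPdef
  have hp1 : 1 ≤ p := by
    rcases hpc with h | ⟨h, _⟩
    · omega
    · have := h.two_le; omega
  have hP1 : (1:ℤ) ≤ P := by rw [hPdef]; exact_mod_cast hp1
  have hPodd : Odd P := by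
    rcases hpc with h | ⟨_, h⟩
    · rw [hPdef, h]; exact ⟨0, by ring⟩
    · rw [hPdef]; exact_mod_cast h
  have hPc : P = 1 ∨ Prime P := by
    rcases hpc with h | ⟨h, _⟩
    · left; rw [hPdef, h]; rfl
    · right; rw [hPdef]; exact Nat.prime_iff_prime_int.mp h
  have hm2 : (m:ℤ) - 2 = P := by rw [hmp]; push_cast; ring
  have hm4 : (m:ℤ) - 4 = P - 2 := by rw [hmp]; push_cast; ring
  have hm3 : m = 3 → P = 1 := by
    intro h; have : p = 1 := by omega
    rw [hPdef, this]; rfl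
  have hm4' : m ≠ 4 := by
    rcases hpc with h | ⟨_, h⟩
    · omega
    · obtain ⟨t, ht⟩ := h; omega
  -- condition translation
  have hpoly : ∀ c : ℤ, ((1:ℕ):ℤ) * polygonal (m:ℤ) c = c*(P*c - (P-2))/2 := by
    intro c; rw [polygonal, hm2, hm4]; push_cast; ring
  set q : ℕ := (P-2).natAbs with hqdef
  have hq2 : ((q:ℤ))^2 = (P-2)^2 := Int.natAbs_sq _
  set Sp : Set (ℕ×ℕ) := {z : ℕ × ℕ |
    2 * ((m : ℤ) - 2) * (n : ℤ) ^ 2 + ((1:ℕ):ℤ) * ((m : ℤ) - 4) ^ 2 =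
    2 * ((m : ℤ) - 2) * (z.1 : ℤ) ^ 2 + ((1:ℕ):ℤ) * (z.2 : ℤ) ^ 2} with hSpdef
  have hmemSp : ∀ z : ℕ×ℕ, z ∈ Sp ↔
      2*P*(n:ℤ)^2 + (P-2)^2 = 2*P*(z.1:ℤ)^2 + (z.2:ℤ)^2 := by
    intro z
    rw [hSpdef]
    simp only [Set.mem_setOf_eq, hm2, hm4, Nat.cast_one, one_mul]
  have htriv : ((n, q) : ℕ×ℕ) ∈ Sp := by
    rw [hmemSp]
    simp only
    rw [hq2]
  -- classification of nontrivial elements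
  have hclass : ∀ x y : ℕ, (x,y) ∈ Sp → (x,y) ≠ (n,q) →
      x < n ∧ 2 ∣ ((n:ℤ) - x) ∧ ∃ c : ℤ, ((m = 3 ∨ m = 4) → 0 < c) ∧
        ((n:ℤ)-x)*((n:ℤ)+x) = 2*(c*(P*c-(P-2))) := by
    intro x y hmem hne
    rw [hmemSp] at hmem
    rcases classify P hP1 hPodd hPc n x y (by exact_mod_cast hn)
        (by positivity) (by positivity) hmem with ⟨hxn, hysq⟩ | ⟨hlt, hdv, c, hcpos, hprod⟩
    · exfalso
      apply hne
      have hx : x = n := by exact_mod_cast hxn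
      have hy : y = q := sq_eq_nat (by rw [hysq, hq2])
      rw [hx, hy]
    · refine ⟨by exact_mod_cast hlt, hdv, c, ?_, hprod⟩
      intro h
      rcases h with h | h
      · exact hcpos (hm3 h)
      · exact absurd h hm4'
  -- finiteness
  have hfin : Sp.Finite := by
    apply Set.Finite.subset ((Set.finite_Iic (n + q)).prod (Set.finite_Iic (2*p*n + q)))
    rintro ⟨x, y⟩ hmem
    rw [hmemSp] at hmem
    simp only [Set.mem_prod, Set.mem_Iic]
    have hx2 : (x:ℤ)^2 ≤ ((n:ℤ) + q)^2 := by
      have h1 : 2*P*(x:ℤ)^2 ≤ 2*P*((n:ℤ)+q)^2 := by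
        nlinarith [hq2, sq_nonneg (y:ℤ), sq_nonneg (n:ℤ), sq_nonneg (q:ℤ),
          mul_nonneg (mul_nonneg (by positivity : (0:ℤ) ≤ P) (by positivity : (0:ℤ) ≤ (n:ℤ)))
            (by positivity : (0:ℤ) ≤ (q:ℤ)),
          mul_nonneg (mul_nonneg (by linarith : (0:ℤ) ≤ 2*P) (by linarith : (0:ℤ) ≤ 2*P-1))
            (sq_nonneg (q:ℤ))]
      have := (mul_le_mul_iff_right₀ (by positivity : (0:ℤ) < 2*P)).mp h1
      exact this
    have hy2 : (y:ℤ)^2 ≤ (2*P*(n:ℤ) + q)^2 := by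
      nlinarith [hq2, sq_nonneg (x:ℤ), sq_nonneg (n:ℤ), sq_nonneg (q:ℤ),
        mul_nonneg (mul_nonneg (by positivity : (0:ℤ) ≤ P) (by positivity : (0:ℤ) ≤ (n:ℤ)))
          (by positivity : (0:ℤ) ≤ (q:ℤ)),
        mul_nonneg (mul_nonneg (by linarith : (0:ℤ) ≤ 2*P) (by linarith : (0:ℤ) ≤ 2*P-1))
          (sq_nonneg (n:ℤ)),
        mul_nonneg (by positivity : (0:ℤ) ≤ 2*P) (sq_nonneg (x:ℤ))]
    have hb1 : (x:ℤ) ≤ (n:ℤ) + q := le_of_sq_le_sq' (by positivity) (by positivity) hx2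
    have hb2 : (y:ℤ) ≤ 2*P*(n:ℤ) + q := le_of_sq_le_sq' (by positivity) (by positivity) hy2
    constructor
    · omega
    · have hcast : ((2*p*n + q : ℕ):ℤ) = 2*P*(n:ℤ) + q := by rw [hPdef]; push_cast; ring
      rw [← hcast] at hb2
      exact_mod_cast hb2
  -- the map
  set f : ℕ×ℕ → ℕ×ℕ := fun z => ((n - z.1)/2, (n + z.1)/2) with hfdef
  have hinj : Set.InjOn f (Sp \ {(n,q)}) := by
    rintro ⟨x1, y1⟩ ⟨hs1, hn1⟩ ⟨x2, y2⟩ ⟨hs2, hn2⟩ hfe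
    simp only [Set.mem_singleton_iff] at hn1 hn2
    obtain ⟨hlt1, hdv1, _⟩ := hclass x1 y1 hs1 hn1
    obtain ⟨hlt2, hdv2, _⟩ := hclass x2 y2 hs2 hn2
    rw [hfdef] at hfe
    simp only [Prod.mk.injEq] at hfe
    obtain ⟨hfe1, hfe2⟩ := hfe
    have hx12 : x1 = x2 := by omega
    rw [hmemSp] at hs1 hs2
    have hy12 : y1 = y2 := by
      apply sq_eq_nat
      rw [hx12] at hs1
      linarith [hs1, hs2]
    rw [hx12, hy12]
  have himg : {z : ℕ × ℕ | 0 < z.1 ∧ z.1 ≤ z.2 ∧ z.1 + z.2 = n ∧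
      ∃ c : ℤ, ((m = 3 ∨ m = 4) → 0 < c) ∧ (z.1 : ℤ) * z.2 = ((1:ℕ):ℤ) * polygonal (m:ℤ) c}
      = f '' (Sp \ {(n,q)}) := by
    ext ⟨a, b⟩
    simp only [Set.mem_setOf_eq, Set.mem_image, Set.mem_diff, Set.mem_singleton_iff]
    constructor
    · rintro ⟨hpos, hle, hsum, c, hcpos, habP⟩
      rw [hpoly] at habP
      obtain ⟨d, hd⟩ := even_key P c hPodd
      have hdd : ((d:ℤ) + d)/2 = d := by omega
      rw [hd, hdd] at habP
      have h2ab : 2*((a:ℤ)*b) = c*(P*c-(P-2)) := by rw [hd]; linarith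
      refine ⟨(b - a, (2*P*c-(P-2)).natAbs), ⟨?_, ?_⟩, ?_⟩
      · rw [hmemSp]
        simp only
        have hba : ((b-a : ℕ):ℤ) = (b:ℤ) - a := by omega
        have hnn : (n:ℤ) = (a:ℤ) + b := by exact_mod_cast hsum.symm
        rw [hba, Int.natAbs_sq, hnn]
        linear_combination 4*P*h2ab
      · intro hcon
        rw [Prod.mk.injEq] at hcon
        omega
      · rw [hfdef]
        simp only [Prod.mk.injEq]
        constructor <;> omega
    · rintro ⟨⟨x, y⟩, ⟨hs, hne⟩, hfab⟩
      obtain ⟨hlt, hdv, c, hcpos, hprod⟩ := hclass x y hs hne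
      rw [hfdef] at hfab
      simp only [Prod.mk.injEq] at hfab
      obtain ⟨hfa, hfb⟩ := hfab
      have hpos : 0 < a := by omega
      have hle : a ≤ b := by omega
      have hsum : a + b = n := by omega
      refine ⟨hpos, hle, hsum, c, hcpos, ?_⟩
      rw [hpoly]
      have h2a : 2*(a:ℤ) = (n:ℤ) - x := by omega
      have h2b : 2*(b:ℤ) = (n:ℤ) + x := by omega
      have h4 : 4*((a:ℤ)*b) = ((n:ℤ)-x)*((n:ℤ)+x) := by
        rw [← h2a, ← h2b]; ring
      obtain ⟨d, hd⟩ := even_key P c hPodd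
      have h5 : (a:ℤ)*b = d := by rw [hd] at hprod; linarith
      rw [hd, h5]
      omega
  have e1 : rmt m 1 n = (Sp \ {(n,q)}).ncard := by
    rw [rmt, himg, Set.ncard_image_of_injOn hinj]
  have e2 : rmt' m 1 n = Sp.ncard := rfl
  rw [e1, e2, Set.ncard_diff_singleton_of_mem htriv]
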